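/- If 0 < p ≤ q ≤ 1, then for every 1 ≤ n ≤ N², the approximation and Kolmogorov numbers of the natural identity satisfy a_n(S_p^N ↪ S_q^N) = d_n(S_p^N ↪ S_q^N) = 1. -/

import Mathlib

open scoped ENNReal

/-- The (unordered) singular values of a real `N × N` matrix `A`:
the square roots of the eigenvalues of `Aᵀ * A`. -/
noncomputable def singularValues (N : ℕ) (A : Matrix (Fin N) (Fin N) ℝ) : Fin N → ℝ :=
  fun i => Real.sqrt ((show (Matrix.transpose A * A).IsHermitian by
    simpa [Matrix.conjTranspose_eq_transpose_of_trivial] using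
      Matrix.isHermitian_conjTranspose_mul_self A).eigenvalues i)

/-- The Schatten `p`-(quasi-)norm of a real `N × N` matrix, `0 < p ≤ ∞`. -/
noncomputable def schattenNorm (N : ℕ) (p : ℝ≥0∞) (A : Matrix (Fin N) (Fin N) ℝ) : ℝ :=
  if p = ⊤ then ⨆ i, singularValues N A i
  else (∑ i, singularValues N A i ^ p.toReal) ^ (1 / p.toReal)

/-- The `n`-th approximation number of the natural identity `S_p^N → S_q^N`. -/
noncomputable def approxNumber (N : ℕ) (p q : ℝ≥0∞) (n : ℕ) : ℝ :=
  sInf {r : ℝ | ∃ T : Matrix (Fin N) (Fin N) ℝ →ₗ[ℝ] Matrix (Fin N) (Fin N) ℝ,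
    Module.finrank ℝ (LinearMap.range T) < n ∧
    r = sSup {s : ℝ | ∃ A, schattenNorm N p A ≤ 1 ∧ s = schattenNorm N q (A - T A)}}

/-- The `n`-th Gelfand number of the natural identity `S_p^N → S_q^N`. -/
noncomputable def gelfandNumber (N : ℕ) (p q : ℝ≥0∞) (n : ℕ) : ℝ :=
  sInf {r : ℝ | ∃ F : Submodule ℝ (Matrix (Fin N) (Fin N) ℝ),
    N ^ 2 - Module.finrank ℝ F < n ∧
    r = sSup {s : ℝ | ∃ A ∈ F, schattenNorm N p A ≤ 1 ∧ s = schattenNorm N q A}}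

/-- The `n`-th Kolmogorov number of the natural identity `S_p^N → S_q^N`. -/
noncomputable def kolmogorovNumber (N : ℕ) (p q : ℝ≥0∞) (n : ℕ) : ℝ :=
  sInf {r : ℝ | ∃ E : Submodule ℝ (Matrix (Fin N) (Fin N) ℝ),
    Module.finrank ℝ E < n ∧
    r = sSup {s : ℝ | ∃ A, schattenNorm N p A ≤ 1 ∧
      s = sInf {t : ℝ | ∃ B ∈ E, t = schattenNorm N q (A - B)}}}

namespace SchattenAux

open Matrix Finset


lemma rstar {m : ℕ} (V : Matrix (Fin m) (Fin m) ℝ) : star V = Vᵀ := by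
  rw [Matrix.star_eq_conjTranspose, Matrix.conjTranspose_eq_transpose_of_trivial]

lemma dot_mulVec_left {m : ℕ} (B : Matrix (Fin m) (Fin m) ℝ) (x y : Fin m → ℝ) :
    (B *ᵥ x) ⬝ᵥ y = x ⬝ᵥ (Bᵀ *ᵥ y) := by
  rw [dotProduct_comm, Matrix.dotProduct_mulVec, dotProduct_comm,
    ← Matrix.vecMul_transpose, Matrix.transpose_transpose]

variable {N : ℕ} {M : Matrix (Fin N) (Fin N) ℝ}

lemma VtV (hM : M.IsHermitian) :
    (hM.eigenvectorUnitary : Matrix (Fin N) (Fin N) ℝ)ᵀ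
      * (hM.eigenvectorUnitary : Matrix (Fin N) (Fin N) ℝ) = 1 := by
  rw [← rstar]
  exact Matrix.mem_unitaryGroup_iff'.mp hM.eigenvectorUnitary.2

lemma VVt (hM : M.IsHermitian) :
    (hM.eigenvectorUnitary : Matrix (Fin N) (Fin N) ℝ)
      * (hM.eigenvectorUnitary : Matrix (Fin N) (Fin N) ℝ)ᵀ = 1 := by
  rw [← rstar]
  exact Matrix.mem_unitaryGroup_iff.mp hM.eigenvectorUnitary.2

lemma spectral_real (hM : M.IsHermitian) :
    M = (hM.eigenvectorUnitary : Matrix (Fin N) (Fin N) ℝ)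
      * Matrix.diagonal hM.eigenvalues
      * (hM.eigenvectorUnitary : Matrix (Fin N) (Fin N) ℝ)ᵀ := by
  have h := hM.spectral_theorem
  rw [Unitary.conjStarAlgAut_apply, rstar] at h
  exact h

lemma basis_dot (hM : M.IsHermitian) (i : Fin N) :
    ⇑(hM.eigenvectorBasis i) ⬝ᵥ ⇑(hM.eigenvectorBasis i) = 1 := by
  have h := orthonormal_iff_ite.mp hM.eigenvectorBasis.orthonormal i i
  simp only [if_pos rfl] at h
  simp only [PiLp.inner_apply, RCLike.inner_apply, conj_trivial] at h
  simpa [dotProduct, mul_comm] using h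

lemma basis_dot_self_sq (hM : M.IsHermitian) (i : Fin N) :
    ∑ j, (hM.eigenvectorBasis i) j * (hM.eigenvectorBasis i) j = 1 := basis_dot hM i

lemma trace_eq_sum_eigs (hM : M.IsHermitian) : M.trace = ∑ i, hM.eigenvalues i := by
  nth_rewrite 1 [spectral_real hM]
  rw [Matrix.trace_mul_cycle]
  rw [VtV hM, Matrix.one_mul, Matrix.trace_diagonal]

lemma rayleigh (hM : M.IsHermitian) {c : ℝ} (hc : ∀ i, hM.eigenvalues i ≤ c)
    (hc0 : 0 ≤ c) (w : Fin N → ℝ) :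
    w ⬝ᵥ (M *ᵥ w) ≤ c * (w ⬝ᵥ w) := by
  set V := (hM.eigenvectorUnitary : Matrix (Fin N) (Fin N) ℝ) with hV
  set y := Vᵀ *ᵥ w with hy
  have h1 : w ⬝ᵥ (M *ᵥ w) = y ⬝ᵥ (Matrix.diagonal hM.eigenvalues *ᵥ y) := by
    nth_rewrite 1 [spectral_real hM]
    rw [← Matrix.mulVec_mulVec, ← Matrix.mulVec_mulVec]
    rw [dotProduct_comm, dot_mulVec_left, dotProduct_comm, hy]
  have h2 : y ⬝ᵥ (Matrix.diagonal hM.eigenvalues *ᵥ y) = ∑ i, hM.eigenvalues i * (y i * y i) := by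
    simp [dotProduct, Matrix.mulVec_diagonal]
    exact Finset.sum_congr rfl fun i _ => by ring
  have h3 : y ⬝ᵥ y = w ⬝ᵥ w := by
    rw [hy, dot_mulVec_left, Matrix.transpose_transpose, Matrix.mulVec_mulVec, VVt hM,
      Matrix.one_mulVec]
  rw [h1, h2, ← h3]
  calc ∑ i, hM.eigenvalues i * (y i * y i) ≤ ∑ i, c * (y i * y i) :=
        Finset.sum_le_sum fun i _ => mul_le_mul_of_nonneg_right (hc i) (mul_self_nonneg _)
    _ = c * (y ⬝ᵥ y) := by rw [← Finset.mul_sum]; rfl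

lemma idem_eigs (hM : M.IsHermitian) (hid : M * M = M) (i : Fin N) :
    hM.eigenvalues i * hM.eigenvalues i = hM.eigenvalues i := by
  set v := ⇑(hM.eigenvectorBasis i) with hv
  have h1 := hM.mulVec_eigenvectorBasis i
  have h2 : M *ᵥ (M *ᵥ v) = (hM.eigenvalues i * hM.eigenvalues i) • v := by
    rw [← hv] at h1
    rw [h1, Matrix.mulVec_smul, h1, smul_smul]
  have h3 : M *ᵥ (M *ᵥ v) = hM.eigenvalues i • v := by
    rw [Matrix.mulVec_mulVec, hid, ← hv] at *
    exact h1
  have h4 := congrArg (fun z => v ⬝ᵥ z) (h2.symm.trans h3)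
  simp only [dotProduct_smul, smul_eq_mul, hv, basis_dot hM i, mul_one] at h4
  exact h4

lemma trace_eq_sum_col {m : ℕ} (M V : Matrix (Fin m) (Fin m) ℝ) (hV : V * Vᵀ = 1) :
    M.trace = ∑ i, (fun j => V j i) ⬝ᵥ (M *ᵥ (fun j => V j i)) := by
  have h1 : ∀ j k, (1 : Matrix (Fin m) (Fin m) ℝ) j k = ∑ i, V j i * V k i := by
    intro j k
    rw [← hV, Matrix.mul_apply]
    simp [Matrix.transpose_apply]
  have expand : ∑ i, (fun j => V j i) ⬝ᵥ (M *ᵥ (fun j => V j i))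
      = ∑ j, ∑ k, M j k * ∑ i, V j i * V k i := by
    simp_rw [dotProduct, Matrix.mulVec, dotProduct, Finset.mul_sum]
    rw [Finset.sum_comm]
    refine Finset.sum_congr rfl fun j _ => ?_
    rw [Finset.sum_comm]
    refine Finset.sum_congr rfl fun k _ => ?_
    exact Finset.sum_congr rfl fun i _ => by ring
  rw [expand]
  simp_rw [← h1]
  rw [Matrix.trace]
  refine Finset.sum_congr rfl fun j _ => ?_
  rw [Finset.sum_eq_single j]
  · simp [Matrix.diag]
  · intro k _ hk; simp [Matrix.one_apply, (Ne.symm hk)]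
  · simp


lemma lp_sum_mono {m : ℕ} (f : Fin m → ℝ) (hf : ∀ i, 0 ≤ f i) {a b : ℝ}
    (ha : 0 < a) (hab : a ≤ b) :
    (∑ i, f i ^ b) ^ (1/b : ℝ) ≤ (∑ i, f i ^ a) ^ (1/a : ℝ) := by
  have hb : 0 < b := lt_of_lt_of_le ha hab
  set S : ℝ := ∑ i, f i ^ a with hS
  have hS0 : 0 ≤ S := Finset.sum_nonneg fun i _ => Real.rpow_nonneg (hf i) a
  rcases eq_or_lt_of_le hS0 with h0 | hpos
  · have hz := (Finset.sum_eq_zero_iff_of_nonneg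
      (fun i (_ : i ∈ Finset.univ) => Real.rpow_nonneg (hf i) a)).mp h0.symm
    have hfz : ∀ i, f i = 0 := by
      intro i
      by_contra hne
      have h1 : 0 < f i := lt_of_le_of_ne (hf i) (Ne.symm hne)
      have h2 : 0 < f i ^ a := Real.rpow_pos_of_pos h1 a
      have h3 := hz i (Finset.mem_univ i)
      linarith
    have hzb : (∑ i, f i ^ b) = 0 := Finset.sum_eq_zero fun i _ => by
      rw [hfz i, Real.zero_rpow hb.ne']
    rw [hzb, ← h0, Real.zero_rpow (one_div_pos.mpr hb).ne',
      Real.zero_rpow (one_div_pos.mpr ha).ne']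
  · have key : ∑ i, f i ^ b ≤ S ^ (b/a : ℝ) := by
      have hfle : ∀ i, f i ^ b ≤ f i ^ a * S ^ ((b-a)/a : ℝ) := by
        intro i
        rcases eq_or_lt_of_le (hf i) with hfi0 | hfi
        · rcases eq_or_lt_of_le hab with rfl | hlt
          · rw [← hfi0]
            simp [sub_self, Real.rpow_zero]
          · rw [← hfi0, Real.zero_rpow hb.ne']
            positivity
        · have hfi_le : f i ^ a ≤ S := Finset.single_le_sum
            (fun i _ => Real.rpow_nonneg (hf i) a) (Finset.mem_univ i)
          have hfib : f i ≤ S ^ (1/a : ℝ) := by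
            have h4 := Real.rpow_le_rpow (Real.rpow_nonneg (hf i) a) hfi_le
              (le_of_lt (one_div_pos.mpr ha))
            rwa [← Real.rpow_mul (hf i), mul_one_div, div_self ha.ne',
              Real.rpow_one] at h4
          have h5 : f i ^ (b - a) ≤ (S ^ (1/a : ℝ)) ^ (b - a) :=
            Real.rpow_le_rpow (le_of_lt hfi) hfib (sub_nonneg.2 hab)
          have h6 : (S ^ (1/a : ℝ)) ^ (b - a) = S ^ ((b-a)/a : ℝ) := by
            rw [← Real.rpow_mul hS0]
            congr 1
            field_simp
          calc f i ^ b = f i ^ a * f i ^ (b - a) := by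
                rw [← Real.rpow_add hfi]; congr 1; ring
            _ ≤ f i ^ a * S ^ ((b-a)/a : ℝ) := by
                rw [← h6]
                exact mul_le_mul_of_nonneg_left h5 (Real.rpow_nonneg (hf i) a)
      calc ∑ i, f i ^ b ≤ ∑ i, f i ^ a * S ^ ((b-a)/a : ℝ) :=
            Finset.sum_le_sum fun i _ => hfle i
        _ = S * S ^ ((b-a)/a : ℝ) := by rw [← Finset.sum_mul]
        _ = S ^ (b/a : ℝ) := by
            nth_rewrite 1 [← Real.rpow_one S]
            rw [← Real.rpow_add hpos]
            congr 1
            field_simp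
            ring
    calc (∑ i, f i ^ b) ^ (1/b : ℝ) ≤ (S ^ (b/a : ℝ)) ^ (1/b : ℝ) :=
          Real.rpow_le_rpow (Finset.sum_nonneg fun i _ => Real.rpow_nonneg (hf i) b)
            key (le_of_lt (one_div_pos.mpr hb))
      _ = S ^ (1/a : ℝ) := by
          rw [← Real.rpow_mul hS0]
          congr 1
          field_simp



lemma ct {m k : ℕ} (X : Matrix (Fin m) (Fin k) ℝ) : Xᴴ = Xᵀ :=
  Matrix.conjTranspose_eq_transpose_of_trivial X

lemma eig_nonneg (X : Matrix (Fin N) (Fin N) ℝ) (i : Fin N) :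
    0 ≤ (Matrix.isHermitian_conjTranspose_mul_self X).eigenvalues i :=
  (Matrix.posSemidef_conjTranspose_mul_self X).eigenvalues_nonneg i

lemma sv_nonneg (X : Matrix (Fin N) (Fin N) ℝ) (i : Fin N) : 0 ≤ singularValues N X i :=
  Real.sqrt_nonneg _

lemma sv_mul_self (X : Matrix (Fin N) (Fin N) ℝ) (i : Fin N) :
    singularValues N X i * singularValues N X i
      = (Matrix.isHermitian_conjTranspose_mul_self X).eigenvalues i :=
  Real.mul_self_sqrt (eig_nonneg X i)

lemma schattenNorm_eq {r : ℝ≥0∞} (hr : r ≠ ⊤) (X : Matrix (Fin N) (Fin N) ℝ) :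
    schattenNorm N r X = (∑ i, singularValues N X i ^ r.toReal) ^ (1 / r.toReal : ℝ) := by
  rw [schattenNorm, if_neg hr]

lemma schattenNorm_nonneg (r : ℝ≥0∞) (X : Matrix (Fin N) (Fin N) ℝ) :
    0 ≤ schattenNorm N r X := by
  rw [schattenNorm]
  split
  · exact Real.iSup_nonneg fun i => sv_nonneg X i
  · exact Real.rpow_nonneg (Finset.sum_nonneg fun i _ => Real.rpow_nonneg (sv_nonneg X i) _) _

lemma schatten_anti {r s : ℝ≥0∞} (hr : 0 < r.toReal) (hrs : r.toReal ≤ s.toReal)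
    (hrt : r ≠ ⊤) (hst : s ≠ ⊤) (X : Matrix (Fin N) (Fin N) ℝ) :
    schattenNorm N s X ≤ schattenNorm N r X := by
  rw [schattenNorm_eq hrt, schattenNorm_eq hst]
  exact lp_sum_mono _ (sv_nonneg X) hr hrs

lemma sum_sv_le_schatten {r : ℝ≥0∞} (hr : 0 < r.toReal) (hr1 : r.toReal ≤ 1)
    (hrt : r ≠ ⊤) (X : Matrix (Fin N) (Fin N) ℝ) :
    ∑ i, singularValues N X i ≤ schattenNorm N r X := by
  have h := lp_sum_mono (singularValues N X) (sv_nonneg X) hr hr1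
  rw [schattenNorm_eq hrt]
  simpa [Real.rpow_one] using h

lemma trace_le_sum_sv (X U : Matrix (Fin N) (Fin N) ℝ)
    (hU : ∀ w, (U *ᵥ w) ⬝ᵥ (U *ᵥ w) ≤ w ⬝ᵥ w) :
    (Xᵀ * U).trace ≤ ∑ i, singularValues N X i := by
  set hH := Matrix.isHermitian_conjTranspose_mul_self X with hHdef
  set V := (hH.eigenvectorUnitary : Matrix (Fin N) (Fin N) ℝ) with hVdef
  rw [trace_eq_sum_col (Xᵀ * U) V (VVt hH)]
  apply Finset.sum_le_sum
  intro i _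
  have hcol : (fun j => V j i) = ⇑(hH.eigenvectorBasis i) := by
    funext j; rfl
  rw [hcol]
  set v := ⇑(hH.eigenvectorBasis i) with hv
  have h1 : v ⬝ᵥ ((Xᵀ * U) *ᵥ v) = (X *ᵥ v) ⬝ᵥ (U *ᵥ v) := by
    rw [← Matrix.mulVec_mulVec, ← dot_mulVec_left]
  have hXv : (X *ᵥ v) ⬝ᵥ (X *ᵥ v) = hH.eigenvalues i := by
    rw [dot_mulVec_left, Matrix.mulVec_mulVec, ← ct X, hH.mulVec_eigenvectorBasis i]
    rw [dotProduct_smul, smul_eq_mul, basis_dot hH i, mul_one]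
  have hcs : (X *ᵥ v) ⬝ᵥ (U *ᵥ v)
      ≤ Real.sqrt ((X *ᵥ v) ⬝ᵥ (X *ᵥ v)) * Real.sqrt ((U *ᵥ v) ⬝ᵥ (U *ᵥ v)) := by
    have h := Real.sum_mul_le_sqrt_mul_sqrt Finset.univ (X *ᵥ v) (U *ᵥ v)
    simpa [dotProduct, sq, pow_two] using h
  have h2 : Real.sqrt ((U *ᵥ v) ⬝ᵥ (U *ᵥ v)) ≤ 1 := by
    have := hU v
    rw [basis_dot hH i] at this
    calc Real.sqrt ((U *ᵥ v) ⬝ᵥ (U *ᵥ v)) ≤ Real.sqrt 1 := Real.sqrt_le_sqrt this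
      _ = 1 := Real.sqrt_one
  calc v ⬝ᵥ ((Xᵀ * U) *ᵥ v) = (X *ᵥ v) ⬝ᵥ (U *ᵥ v) := h1
    _ ≤ Real.sqrt ((X *ᵥ v) ⬝ᵥ (X *ᵥ v)) * Real.sqrt ((U *ᵥ v) ⬝ᵥ (U *ᵥ v)) := hcs
    _ ≤ Real.sqrt ((X *ᵥ v) ⬝ᵥ (X *ᵥ v)) * 1 :=
        mul_le_mul_of_nonneg_left h2 (Real.sqrt_nonneg _)
    _ = singularValues N X i := by rw [mul_one, hXv]; rfl

lemma trace_vecMulVec_t (u v : Fin N → ℝ) (W : Matrix (Fin N) (Fin N) ℝ) :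
    ((Matrix.vecMulVec u v)ᵀ * W).trace = u ⬝ᵥ (W *ᵥ v) := by
  simp only [Matrix.trace, Matrix.diag, Matrix.mul_apply, Matrix.transpose_apply,
    Matrix.vecMulVec_apply, dotProduct, Matrix.mulVec]
  rw [Finset.sum_comm]
  refine Finset.sum_congr rfl fun i _ => ?_
  rw [Finset.mul_sum]
  exact Finset.sum_congr rfl fun j _ => by ring


lemma exists_perp (E : Submodule ℝ (Matrix (Fin N) (Fin N) ℝ))
    (hE : Module.finrank ℝ E < N * N) :
    ∃ U : Matrix (Fin N) (Fin N) ℝ, U ≠ 0 ∧ ∀ B ∈ E, (Bᵀ * U).trace = 0 := by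
  classical
  let L : Matrix (Fin N) (Fin N) ℝ →ₗ[ℝ] (E →ₗ[ℝ] ℝ) :=
    { toFun := fun Umat =>
        { toFun := fun B => ((B : Matrix (Fin N) (Fin N) ℝ)ᵀ * Umat).trace
          map_add' := by
            intro B C
            simp [Matrix.transpose_add, Matrix.add_mul]
          map_smul' := by
            intro c B
            simp [Matrix.transpose_smul, Matrix.smul_mul] }
      map_add' := by
        intro U1 U2
        ext B
        simp [Matrix.mul_add]
      map_smul' := by
        intro c U1
        ext B
        simp [Matrix.mul_smul] }
  have hMat : Module.finrank ℝ (Matrix (Fin N) (Fin N) ℝ) = N * N := by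
    rw [Module.finrank_matrix]
    simp
  have hker : LinearMap.ker L ≠ ⊥ := by
    intro hbot
    have h1 := LinearMap.finrank_range_add_finrank_ker L
    have h2 : Module.finrank ℝ (LinearMap.range L) ≤ Module.finrank ℝ (E →ₗ[ℝ] ℝ) :=
      Submodule.finrank_le _
    have h3 : Module.finrank ℝ (E →ₗ[ℝ] ℝ) = Module.finrank ℝ E := by
      rw [Module.finrank_linearMap, Module.finrank_self, mul_one]
    have h5 : Module.finrank ℝ (LinearMap.ker L) = 0 := by
      rw [hbot]; exact finrank_bot ℝ _
    rw [hMat, h5] at h1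
    rw [h3] at h2
    omega
  obtain ⟨U, hU_mem, hU_ne⟩ := Submodule.ne_bot_iff _ |>.mp hker
  refine ⟨U, hU_ne, fun B hB => ?_⟩
  have hz : L U = 0 := LinearMap.mem_ker.mp hU_mem
  have h : (L U) ⟨B, hB⟩ = 0 := by rw [hz]; rfl
  simpa [L] using h

lemma exists_good (E : Submodule ℝ (Matrix (Fin N) (Fin N) ℝ))
    (hE : Module.finrank ℝ E < N * N) :
    ∃ A : Matrix (Fin N) (Fin N) ℝ,
      (∀ r : ℝ≥0∞, r ≠ ⊤ → 0 < r.toReal → schattenNorm N r A = 1) ∧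
      (∀ B ∈ E, 1 ≤ ∑ i, singularValues N (A - B) i) := by
  classical
  have hN : 0 < N := by
    rcases Nat.eq_zero_or_pos N with h | h
    · subst h; simp at hE
    · exact h
  obtain ⟨U, hUne, hUperp⟩ := exists_perp E hE
  set hH := Matrix.isHermitian_conjTranspose_mul_self U with hHdef
  have htr : 0 < (Uᴴ * U).trace := by
    have he : (Uᴴ * U).trace = ∑ j, ∑ i, U i j * U i j := by
      simp [Matrix.trace, Matrix.diag, Matrix.mul_apply, ct U, Matrix.transpose_apply]
    rw [he]
    obtain ⟨i, j, hij⟩ : ∃ i j, U i j ≠ 0 := by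
      by_contra h
      push_neg at h
      exact hUne (by ext i j; exact h i j)
    refine Finset.sum_pos' (fun j _ => Finset.sum_nonneg fun i _ => mul_self_nonneg _)
      ⟨j, Finset.mem_univ _, Finset.sum_pos' (fun i _ => mul_self_nonneg _)
        ⟨i, Finset.mem_univ _, mul_self_pos.mpr hij⟩⟩
  have hsum : 0 < ∑ i, hH.eigenvalues i := by
    rw [← trace_eq_sum_eigs hH]; exact htr
  obtain ⟨i₀, _, hmax⟩ := Finset.exists_max_image Finset.univ hH.eigenvalues
    ⟨⟨0, hN⟩, Finset.mem_univ _⟩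
  have hmax' : ∀ i, hH.eigenvalues i ≤ hH.eigenvalues i₀ :=
    fun i => hmax i (Finset.mem_univ i)
  have hlampos : 0 < hH.eigenvalues i₀ := by
    by_contra h
    push_neg at h
    have : ∑ i, hH.eigenvalues i ≤ 0 :=
      Finset.sum_nonpos fun i _ => le_trans (hmax' i) h
    linarith
  set lam := hH.eigenvalues i₀ with hlam
  set s := Real.sqrt lam with hsdef
  have hs : 0 < s := Real.sqrt_pos.mpr hlampos
  have hss : s * s = lam := Real.mul_self_sqrt hlampos.le
  set v := ⇑(hH.eigenvectorBasis i₀) with hv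
  have hvv : v ⬝ᵥ v = 1 := basis_dot hH i₀
  have heig : (Uᴴ * U) *ᵥ v = lam • v := hH.mulVec_eigenvectorBasis i₀
  have hUv : (U *ᵥ v) ⬝ᵥ (U *ᵥ v) = lam := by
    rw [dot_mulVec_left, Matrix.mulVec_mulVec, ← ct U, heig, dotProduct_smul,
      smul_eq_mul, hvv, mul_one]
  set u := s⁻¹ • (U *ᵥ v) with hu
  have hUv_eq : U *ᵥ v = s • u := by
    rw [hu, smul_smul, mul_inv_cancel₀ hs.ne', one_smul]
  have huu : u ⬝ᵥ u = 1 := by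
    rw [hu, smul_dotProduct, dotProduct_smul, smul_eq_mul, smul_eq_mul, hUv]
    rw [← hss]
    field_simp
  set W := s⁻¹ • U with hW
  set A := Matrix.vecMulVec u v with hA
  -- W contracts
  have hWc : ∀ w, (W *ᵥ w) ⬝ᵥ (W *ᵥ w) ≤ w ⬝ᵥ w := by
    intro w
    have h1 : (W *ᵥ w) = s⁻¹ • (U *ᵥ w) := by
      rw [hW, Matrix.smul_mulVec]
    have h2 : (U *ᵥ w) ⬝ᵥ (U *ᵥ w) = w ⬝ᵥ ((Uᴴ * U) *ᵥ w) := by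
      rw [dot_mulVec_left, Matrix.mulVec_mulVec, ← ct U]
    have h3 := rayleigh hH hmax' hlampos.le w
    rw [h1, smul_dotProduct, dotProduct_smul, smul_eq_mul, smul_eq_mul, h2]
    calc s⁻¹ * (s⁻¹ * (w ⬝ᵥ ((Uᴴ * U) *ᵥ w))) ≤ s⁻¹ * (s⁻¹ * (lam * (w ⬝ᵥ w))) := by
          have hinv : (0:ℝ) ≤ s⁻¹ := (inv_nonneg).mpr hs.le
          exact mul_le_mul_of_nonneg_left (mul_le_mul_of_nonneg_left h3 hinv) hinv
      _ = w ⬝ᵥ w := by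
          rw [← hss]; field_simp
  -- trace pairing with A
  have hAW : (Aᵀ * W).trace = 1 := by
    rw [hA, trace_vecMulVec_t, hW, Matrix.smul_mulVec, hUv_eq, dotProduct_smul,
      dotProduct_smul, smul_eq_mul, smul_eq_mul, huu]
    field_simp
  have hBW : ∀ B ∈ E, (Bᵀ * W).trace = 0 := by
    intro B hB
    rw [hW, Matrix.mul_smul, Matrix.trace_smul, hUperp B hB, smul_zero]
  -- Schatten norms of A are all 1
  have hAtA : Aᴴ * A = Matrix.vecMulVec v v := by
    rw [ct A]
    ext i j
    simp only [Matrix.mul_apply, Matrix.transpose_apply, hA, Matrix.vecMulVec_apply]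
    have : ∑ k, u k * v i * (u k * v j) = (∑ k, u k * u k) * (v i * v j) := by
      rw [Finset.sum_mul]
      exact Finset.sum_congr rfl fun k _ => by ring
    have huu' : (∑ k, u k * u k) = 1 := huu
    rw [this, huu', one_mul]
  have hidem : (Aᴴ * A) * (Aᴴ * A) = Aᴴ * A := by
    rw [hAtA]
    ext i j
    simp only [Matrix.mul_apply, Matrix.vecMulVec_apply]
    have : ∑ k, v i * v k * (v k * v j) = (∑ k, v k * v k) * (v i * v j) := by
      rw [Finset.sum_mul]
      exact Finset.sum_congr rfl fun k _ => by ring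
    have hvv' : (∑ k, v k * v k) = 1 := hvv
    rw [this, hvv', one_mul]
  set hHA := Matrix.isHermitian_conjTranspose_mul_self A with hHAdef
  have heigA : ∀ i, hHA.eigenvalues i = 0 ∨ hHA.eigenvalues i = 1 := by
    intro i
    have h := idem_eigs hHA hidem i
    have h2 : hHA.eigenvalues i * (hHA.eigenvalues i - 1) = 0 := by
      rw [mul_sub, mul_one, h, sub_self]
    rcases mul_eq_zero.mp h2 with h0 | h1
    · left; exact h0
    · right; linarith [sub_eq_zero.mp h1]
  have hsumA : ∑ i, hHA.eigenvalues i = 1 := by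
    rw [← trace_eq_sum_eigs hHA, hAtA]
    have : (Matrix.vecMulVec v v).trace = ∑ i, v i * v i := by
      simp [Matrix.trace, Matrix.diag, Matrix.vecMulVec_apply]
    have hvv' : (∑ i, v i * v i) = 1 := hvv
    rw [this, hvv']
  have hnorm : ∀ r : ℝ≥0∞, r ≠ ⊤ → 0 < r.toReal → schattenNorm N r A = 1 := by
    intro r hrt hr
    rw [schattenNorm_eq hrt]
    have hsv : ∀ i, singularValues N A i ^ r.toReal = hHA.eigenvalues i := by
      intro i
      rcases heigA i with h0 | h1
      · rw [show singularValues N A i = Real.sqrt (hHA.eigenvalues i) from rfl, h0, Real.sqrt_zero, Real.zero_rpow hr.ne']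
      · rw [show singularValues N A i = Real.sqrt (hHA.eigenvalues i) from rfl, h1, Real.sqrt_one, Real.one_rpow]
    rw [Finset.sum_congr rfl fun i _ => hsv i, hsumA, Real.one_rpow]
  refine ⟨A, hnorm, fun B hB => ?_⟩
  have h1 : ((A - B)ᵀ * W).trace = 1 := by
    rw [Matrix.transpose_sub, Matrix.sub_mul, Matrix.trace_sub, hAW, hBW B hB, sub_zero]
  calc (1:ℝ) = ((A - B)ᵀ * W).trace := h1.symm
    _ ≤ ∑ i, singularValues N (A - B) i := trace_le_sum_sv (A - B) W hWc



section Frobenius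

attribute [local instance] Matrix.frobeniusSeminormedAddCommGroup
  Matrix.frobeniusNormedAddCommGroup Matrix.frobeniusNormedSpace

lemma frob_eq (X : Matrix (Fin N) (Fin N) ℝ) :
    ‖X‖ = Real.sqrt (∑ i, ∑ j, X i j * X i j) := by
  rw [Matrix.frobenius_norm_def, Real.sqrt_eq_rpow]
  congr 1
  refine Finset.sum_congr rfl fun i _ => Finset.sum_congr rfl fun j _ => ?_
  have h2 : ((2:ℝ)) = ((2:ℕ):ℝ) := by norm_num
  rw [Real.norm_eq_abs, h2, Real.rpow_natCast, sq_abs, sq]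

lemma sum_sv_sq (X : Matrix (Fin N) (Fin N) ℝ) :
    ∑ i, singularValues N X i * singularValues N X i = ∑ i, ∑ j, X i j * X i j := by
  rw [Finset.sum_congr rfl fun i _ => sv_mul_self X i,
    ← trace_eq_sum_eigs (Matrix.isHermitian_conjTranspose_mul_self X)]
  have he : (Xᴴ * X).trace = ∑ j, ∑ i, X i j * X i j := by
    simp [Matrix.trace, Matrix.diag, Matrix.mul_apply, ct X, Matrix.transpose_apply]
  rw [he, Finset.sum_comm]

lemma sv_le_frob (X : Matrix (Fin N) (Fin N) ℝ) (i : Fin N) :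
    singularValues N X i ≤ ‖X‖ := by
  rw [frob_eq, ← sum_sv_sq]
  have hs : singularValues N X i * singularValues N X i
      ≤ ∑ j, singularValues N X j * singularValues N X j :=
    Finset.single_le_sum (f := fun j => singularValues N X j * singularValues N X j)
      (fun j _ => mul_self_nonneg _) (Finset.mem_univ i)
  calc singularValues N X i
      = Real.sqrt (singularValues N X i * singularValues N X i) :=
        (Real.sqrt_mul_self (sv_nonneg X i)).symm
    _ ≤ Real.sqrt (∑ j, singularValues N X j * singularValues N X j) :=
        Real.sqrt_le_sqrt hs

lemma frob_le_schatten {r : ℝ≥0∞} (hr : 0 < r.toReal) (hr2 : r.toReal ≤ 2) (hrt : r ≠ ⊤)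
    (X : Matrix (Fin N) (Fin N) ℝ) : ‖X‖ ≤ schattenNorm N r X := by
  have hfe : ‖X‖ = (∑ i, singularValues N X i ^ (2:ℝ)) ^ (1/(2:ℝ)) := by
    rw [frob_eq, ← sum_sv_sq, Real.sqrt_eq_rpow]
    congr 1
    refine Finset.sum_congr rfl fun i _ => ?_
    have h2 : ((2:ℝ)) = ((2:ℕ):ℝ) := by norm_num
    rw [h2, Real.rpow_natCast, sq]
  rw [hfe, schattenNorm_eq hrt]
  exact lp_sum_mono _ (sv_nonneg X) hr hr2

lemma schatten_le_frob {r : ℝ≥0∞} (hr : 0 < r.toReal) (hrt : r ≠ ⊤)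
    (X : Matrix (Fin N) (Fin N) ℝ) :
    schattenNorm N r X ≤ (N:ℝ) ^ (1/r.toReal : ℝ) * ‖X‖ := by
  rw [schattenNorm_eq hrt]
  have h2 : ∑ i, singularValues N X i ^ r.toReal ≤ (N:ℝ) * ‖X‖ ^ r.toReal := by
    calc ∑ i, singularValues N X i ^ r.toReal ≤ ∑ _i : Fin N, ‖X‖ ^ r.toReal :=
          Finset.sum_le_sum fun i _ =>
            Real.rpow_le_rpow (sv_nonneg X i) (sv_le_frob X i) hr.le
      _ = (N:ℝ) * ‖X‖ ^ r.toReal := by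
          rw [Finset.sum_const, Finset.card_univ, Fintype.card_fin, nsmul_eq_mul]
  calc (∑ i, singularValues N X i ^ r.toReal) ^ (1/r.toReal : ℝ)
      ≤ ((N:ℝ) * ‖X‖ ^ r.toReal) ^ (1/r.toReal : ℝ) :=
        Real.rpow_le_rpow (Finset.sum_nonneg fun i _ =>
          Real.rpow_nonneg (sv_nonneg X i) _) h2 (le_of_lt (one_div_pos.mpr hr))
    _ = (N:ℝ) ^ (1/r.toReal : ℝ) * ‖X‖ := by
        rw [Real.mul_rpow (Nat.cast_nonneg N) (Real.rpow_nonneg (norm_nonneg X) _),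
          ← Real.rpow_mul (norm_nonneg X), mul_one_div, div_self hr.ne', Real.rpow_one]

end Frobenius

lemma sInf_eq_one {S : Set ℝ} (h1 : (1:ℝ) ∈ S) (h2 : ∀ r ∈ S, 1 ≤ r) : sInf S = 1 :=
  le_antisymm (csInf_le ⟨1, fun r hr => h2 r hr⟩ h1) (le_csInf ⟨1, h1⟩ h2)

lemma sSup_eq_one {S : Set ℝ} (h1 : (1:ℝ) ∈ S) (h2 : ∀ s ∈ S, s ≤ 1) : sSup S = 1 :=
  le_antisymm (csSup_le ⟨1, h1⟩ h2) (le_csSup ⟨1, fun s hs => h2 s hs⟩ h1)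

end SchattenAux


attribute [local instance] Matrix.frobeniusSeminormedAddCommGroup
  Matrix.frobeniusNormedAddCommGroup Matrix.frobeniusNormedSpace

/-- If `0 < p ≤ q ≤ 1`, then for every `1 ≤ n ≤ N²` the approximation and Kolmogorov
numbers of the natural identity satisfy `a_n(S_p^N ↪ S_q^N) = d_n(S_p^N ↪ S_q^N) = 1`. -/
theorem approx_kolmogorov_eq_one (N : ℕ) (p q : ℝ≥0∞)
    (hp0 : 0 < p) (hpq : p ≤ q) (hq1 : q ≤ 1)
    (n : ℕ) (hn1 : 1 ≤ n) (hn2 : n ≤ N ^ 2) :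
    approxNumber N p q n = 1 ∧ kolmogorovNumber N p q n = 1 := by
  classical
  have hpt : p ≠ ⊤ := ne_top_of_le_ne_top ENNReal.one_ne_top (hpq.trans hq1)
  have hqt : q ≠ ⊤ := ne_top_of_le_ne_top ENNReal.one_ne_top hq1
  have ha : 0 < p.toReal := ENNReal.toReal_pos hp0.ne' hpt
  have hb : 0 < q.toReal := ENNReal.toReal_pos (lt_of_lt_of_le hp0 hpq).ne' hqt
  have hab : p.toReal ≤ q.toReal := ENNReal.toReal_mono hqt hpq
  have hb1 : q.toReal ≤ 1 := by
    have := ENNReal.toReal_mono ENNReal.one_ne_top hq1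
    simpa using this
  have ha2 : p.toReal ≤ 2 := by linarith
  have hn2' : n ≤ N * N := by rw [pow_two] at hn2; exact hn2
  have hNN : 0 < N * N := lt_of_lt_of_le hn1 hn2'
  -- global witness with Schatten norms all equal to 1
  obtain ⟨A₁, hA₁norm, _⟩ := SchattenAux.exists_good
    (⊥ : Submodule ℝ (Matrix (Fin N) (Fin N) ℝ)) (by simpa [finrank_bot] using hNN)
  have hA₁p : schattenNorm N p A₁ = 1 := hA₁norm p hpt ha
  have hA₁q : schattenNorm N q A₁ = 1 := hA₁norm q hqt hb
  have hmono : ∀ X, schattenNorm N q X ≤ schattenNorm N p X :=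
    fun X => SchattenAux.schatten_anti ha hab hpt hqt X
  constructor
  · -- approximation numbers
    rw [approxNumber]
    apply SchattenAux.sInf_eq_one
    · -- 1 is attained with T = 0
      refine ⟨0, ?_, ?_⟩
      · rw [LinearMap.range_zero]
        have hfb : Module.finrank ℝ
            (⊥ : Submodule ℝ (Matrix (Fin N) (Fin N) ℝ)) = 0 := finrank_bot ℝ _
        omega
      · symm
        apply SchattenAux.sSup_eq_one
        · exact ⟨A₁, le_of_eq hA₁p, by simp [hA₁q]⟩
        · rintro s ⟨A', hA', rfl⟩
          simpa using le_trans (hmono _) hA'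
    · rintro r ⟨T, hT, rfl⟩
      obtain ⟨A, hAnorm, hAdist⟩ := SchattenAux.exists_good (LinearMap.range T)
        (lt_of_lt_of_le hT hn2')
      obtain ⟨C, hC0, hC⟩ := SemilinearMapClass.bound_of_continuous T (LinearMap.continuous_of_finiteDimensional T)
      have hbdd : BddAbove {s : ℝ | ∃ A, schattenNorm N p A ≤ 1 ∧
          s = schattenNorm N q (A - T A)} := by
        refine ⟨(N:ℝ) ^ (1/q.toReal : ℝ) * (1 + C), ?_⟩
        rintro s ⟨A', hA', rfl⟩
        have h2 : ‖A'‖ ≤ 1 := le_trans (SchattenAux.frob_le_schatten ha ha2 hpt A') hA'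
        have h3 : ‖T A'‖ ≤ C * ‖A'‖ := hC A'
        have h1 : ‖A' - T A'‖ ≤ 1 + C := by
          calc ‖A' - T A'‖ ≤ ‖A'‖ + ‖T A'‖ := norm_sub_le _ _
            _ ≤ 1 + C * ‖A'‖ := add_le_add h2 h3
            _ ≤ 1 + C := by nlinarith [hC0.le, norm_nonneg A']
        calc schattenNorm N q (A' - T A')
            ≤ (N:ℝ) ^ (1/q.toReal : ℝ) * ‖A' - T A'‖ :=
              SchattenAux.schatten_le_frob hb hqt _
          _ ≤ (N:ℝ) ^ (1/q.toReal : ℝ) * (1 + C) :=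
              mul_le_mul_of_nonneg_left h1 (Real.rpow_nonneg (Nat.cast_nonneg N) _)
      have hmem : schattenNorm N q (A - T A) ∈ {s : ℝ | ∃ A, schattenNorm N p A ≤ 1 ∧
          s = schattenNorm N q (A - T A)} := ⟨A, le_of_eq (hAnorm p hpt ha), rfl⟩
      have h1 : 1 ≤ schattenNorm N q (A - T A) :=
        le_trans (hAdist (T A) (LinearMap.mem_range_self T A))
          (SchattenAux.sum_sv_le_schatten hb hb1 hqt _)
      exact le_trans h1 (le_csSup hbdd hmem)
  · -- Kolmogorov numbers
    rw [kolmogorovNumber]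
    apply SchattenAux.sInf_eq_one
    · -- 1 is attained with E = ⊥
      refine ⟨⊥, by rw [finrank_bot]; omega, ?_⟩
      symm
      apply SchattenAux.sSup_eq_one
      · refine ⟨A₁, le_of_eq hA₁p, ?_⟩
        have hset : {t : ℝ | ∃ B ∈ (⊥ : Submodule ℝ (Matrix (Fin N) (Fin N) ℝ)),
            t = schattenNorm N q (A₁ - B)} = {schattenNorm N q A₁} := by
          ext t
          simp [Submodule.mem_bot]
        rw [hset, csInf_singleton, hA₁q]
      · rintro s ⟨A', hA', rfl⟩
        have hset : {t : ℝ | ∃ B ∈ (⊥ : Submodule ℝ (Matrix (Fin N) (Fin N) ℝ)),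
            t = schattenNorm N q (A' - B)} = {schattenNorm N q A'} := by
          ext t
          simp [Submodule.mem_bot]
        rw [hset, csInf_singleton]
        exact le_trans (hmono _) hA'
    · rintro r ⟨E, hE, rfl⟩
      obtain ⟨A, hAnorm, hAdist⟩ := SchattenAux.exists_good E (lt_of_lt_of_le hE hn2')
      have hbdd : BddAbove {s : ℝ | ∃ A, schattenNorm N p A ≤ 1 ∧
          s = sInf {t : ℝ | ∃ B ∈ E, t = schattenNorm N q (A - B)}} := by
        refine ⟨1, ?_⟩
        rintro s ⟨A', hA', rfl⟩
        have hblw : BddBelow {t : ℝ | ∃ B ∈ E, t = schattenNorm N q (A' - B)} := by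
          refine ⟨0, ?_⟩
          rintro t ⟨B, _, rfl⟩
          exact SchattenAux.schattenNorm_nonneg q _
        have hmem0 : schattenNorm N q A' ∈ {t : ℝ | ∃ B ∈ E, t = schattenNorm N q (A' - B)} :=
          ⟨0, E.zero_mem, by rw [sub_zero]⟩
        exact le_trans (csInf_le hblw hmem0) (le_trans (hmono _) hA')
      have hsinf : 1 ≤ sInf {t : ℝ | ∃ B ∈ E, t = schattenNorm N q (A - B)} := by
        apply le_csInf
        · exact ⟨schattenNorm N q A, 0, E.zero_mem, by rw [sub_zero]⟩
        · rintro t ⟨B, hB, rfl⟩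
          exact le_trans (hAdist B hB) (SchattenAux.sum_sv_le_schatten hb hb1 hqt _)
      have hmem : sInf {t : ℝ | ∃ B ∈ E, t = schattenNorm N q (A - B)}
          ∈ {s : ℝ | ∃ A, schattenNorm N p A ≤ 1 ∧
            s = sInf {t : ℝ | ∃ B ∈ E, t = schattenNorm N q (A - B)}} :=
        ⟨A, le_of_eq (hAnorm p hpt ha), rfl⟩
      exact le_trans hsinf (le_csSup hbdd hmem)
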